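/- Asymptotic optimality of the fixed importance-sampling change of measure: let s_1,…,s_σ ≥ 2 be integers, a_1,…,a_σ > 0 with ∑ a_i = 1, μ ∈ (0,1), let λ* be the unique real solution of ∑_{i=1}^σ a_i (s_i − 1)/(e^λ + s_i − 1) = μ/2, and θ_i* = (s_i − 1)/(e^{λ*} + s_i − 1). For each n let l_1^{(n)},…,l_σ^{(n)} ∈ ℕ with ∑_i l_i^{(n)} = n and l_i^{(n)}/n → a_i, let b_n, r_n be the corresponding block and cost functions, T_n ∈ ℕ with T_n/n → μ/2, and set sampling weights q_n(1,j) = θ*_{b_n(j)}, q_n(0,j) = 1 − θ*_{b_n(j)}. Then the second moment Σ_n = ∑_{x ∈ {0,1}^n with S(x) ≤ T_n} ∏_{j=1}^n r_n(x_j,j)² / q_n(x_j,j) satisfies limsup_{n→∞} (1/n) log Σ_n ≤ 2 V₀, where V₀ = sup { ∑_{i=1}^σ a_i ( θ_i log(s_i − 1) + H(θ_i) ) : θ ∈ (0,1)^σ, ∑ a_i θ_i = μ/2 }. -/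

import Mathlib

open Finset

/-- The entropy function `H(θ) = -θ log θ - (1-θ) log(1-θ)`. -/
noncomputable def Hent (θ : ℝ) : ℝ := -θ * Real.log θ - (1 - θ) * Real.log (1 - θ)

lemma Hent_le_one {θ : ℝ} (h0 : 0 < θ) (h1 : θ < 1) : Hent θ ≤ 1 := by
  have h0' : (0:ℝ) < 1 - θ := by linarith
  have a : -Real.log θ ≤ θ⁻¹ - 1 := by
    rw [← Real.log_inv]; exact Real.log_le_sub_one_of_pos (inv_pos.2 h0)
  have b : -Real.log (1 - θ) ≤ (1 - θ)⁻¹ - 1 := by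
    rw [← Real.log_inv]; exact Real.log_le_sub_one_of_pos (inv_pos.2 h0')
  have A := mul_le_mul_of_nonneg_left a h0.le
  have B := mul_le_mul_of_nonneg_left b h0'.le
  have hi : θ * θ⁻¹ = 1 := mul_inv_cancel₀ h0.ne'
  have hi2 : (1 - θ) * (1 - θ)⁻¹ = 1 := mul_inv_cancel₀ h0'.ne'
  unfold Hent
  nlinarith [A, B, hi, hi2]

lemma block_sum {σ : ℕ} (n : ℕ) (l : Fin σ → ℕ) (hl : ∑ i, l i = n)
    (b : ℕ → Fin σ)
    (hb : ∀ j < n, ∀ i : Fin σ, b j = i ↔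
      (∑ k ∈ univ.filter (fun k => k < i), l k) ≤ j ∧
        j < (∑ k ∈ univ.filter (fun k => k < i), l k) + l i)
    (F : Fin σ → ℝ) :
    ∑ j : Fin n, F (b j.val) = ∑ i, (l i : ℝ) * F i := by
  rw [Fin.sum_univ_eq_sum_range (fun j => F (b j)) n]
  rw [← Finset.sum_fiberwise_of_maps_to (g := b) (t := univ) (fun j _ => mem_univ _)]
  refine Finset.sum_congr rfl fun i _ => ?_
  have hle : (∑ k ∈ univ.filter (fun k => k < i), l k) + l i ≤ n := by
    have hni : i ∉ univ.filter (fun k => k < i) := by simp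
    have := Finset.sum_le_sum_of_subset (f := l)
      (Finset.subset_univ (insert i (univ.filter (fun k => k < i))))
    rw [Finset.sum_insert hni, hl] at this
    omega
  have hfib : (range n).filter (fun j => b j = i) =
      Finset.Ico (∑ k ∈ univ.filter (fun k => k < i), l k)
        ((∑ k ∈ univ.filter (fun k => k < i), l k) + l i) := by
    ext j
    simp only [Finset.mem_filter, Finset.mem_range, Finset.mem_Ico]
    constructor
    · rintro ⟨hj, hbj⟩
      exact (hb j hj i).1 hbj
    · rintro ⟨h1, h2⟩
      have hj : j < n := lt_of_lt_of_le h2 hle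
      exact ⟨hj, (hb j hj i).2 ⟨h1, h2⟩⟩
  rw [Finset.sum_congr rfl (fun j hj => by rw [(Finset.mem_filter.1 hj).2] : ∀ j ∈ (range n).filter (fun j => b j = i), F (b j) = F i)]
  rw [Finset.sum_const, hfib, Nat.card_Ico, nsmul_eq_mul]
  rw [Nat.add_sub_cancel_left]

lemma sigma_bound (n : ℕ) (lam : ℝ) (hlam : 0 ≤ lam) (T : ℕ)
    (c : Fin n → ℝ) (hc : ∀ j, 1 ≤ c j) (θ : Fin n → ℝ)
    (hθ : ∀ j, θ j = c j / (Real.exp lam + c j)) :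
    (∑ x ∈ univ.filter (fun x : Fin n → Bool =>
            (∑ j, if x j then 1 else 0) ≤ T),
          ∏ j : Fin n,
            ((if x j then c j else 1) ^ 2
              / (if x j then θ j else 1 - θ j)))
      ≤ Real.exp (2 * lam * T) *
        ∏ j : Fin n, (Real.exp (-(2 * lam)) * (Real.exp lam + c j) ^ 2) := by
  have hE : (0 : ℝ) < Real.exp lam := Real.exp_pos _
  have hcpos : ∀ j, (0:ℝ) < c j := fun j => lt_of_lt_of_le one_pos (hc j)
  have hEc : ∀ j, (0:ℝ) < Real.exp lam + c j := fun j => add_pos hE (hcpos j)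
  set g : Fin n → Bool → ℝ := fun j x =>
    if x then c j * (Real.exp lam + c j) * Real.exp (-(2 * lam))
    else (Real.exp lam + c j) / Real.exp lam with hg
  have hgnn : ∀ j x, 0 ≤ g j x := by
    intro j x
    cases x
    · exact le_of_lt (div_pos (hEc j) hE)
    · exact le_of_lt (mul_pos (mul_pos (hcpos j) (hEc j)) (Real.exp_pos _))
  have hkey : ∀ (x : Fin n → Bool) (j : Fin n),
      (if x j then c j else 1) ^ 2 / (if x j then θ j else 1 - θ j)
        = Real.exp (2 * lam * (if x j then 1 else 0)) * g j (x j) := by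
    intro x j
    have hc0 : c j ≠ 0 := (hcpos j).ne'
    have hEc0 : Real.exp lam + c j ≠ 0 := (hEc j).ne'
    have h1 : (1:ℝ) - θ j = Real.exp lam / (Real.exp lam + c j) := by
      rw [hθ j]; field_simp; ring
    have hee : Real.exp (2 * lam) * Real.exp (-(2 * lam)) = 1 := by
      rw [← Real.exp_add]; simp
    cases hx : x j <;>
      simp only [hx, Bool.false_eq_true, if_true, if_false, hg, mul_zero, mul_one,
        Real.exp_zero, one_mul, one_pow]
    · rw [h1, one_div_div]
    · have h2 : c j ^ 2 / (c j / (Real.exp lam + c j)) = c j * (Real.exp lam + c j) := by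
        rw [div_div_eq_mul_div, sq]
        field_simp
      rw [hθ j, h2]
      linear_combination (-(c j * (Real.exp lam + c j))) * hee
  have hstep1 : ∀ x ∈ univ.filter (fun x : Fin n → Bool =>
      (∑ j, if x j then 1 else 0) ≤ T),
      (∏ j : Fin n, ((if x j then c j else 1) ^ 2
          / (if x j then θ j else 1 - θ j)))
        ≤ Real.exp (2 * lam * T) * ∏ j : Fin n, g j (x j) := by
    intro x hx
    have hxT : (∑ j, if x j then 1 else 0 : ℕ) ≤ T := (Finset.mem_filter.1 hx).2
    calc (∏ j : Fin n, ((if x j then c j else 1) ^ 2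
          / (if x j then θ j else 1 - θ j)))
        = ∏ j : Fin n, (Real.exp (2 * lam * (if x j then 1 else 0)) * g j (x j)) := by
          exact Finset.prod_congr rfl fun j _ => hkey x j
      _ = (∏ j : Fin n, Real.exp (2 * lam * (if x j then 1 else 0))) *
            ∏ j : Fin n, g j (x j) := Finset.prod_mul_distrib
      _ = Real.exp (∑ j : Fin n, 2 * lam * (if x j then 1 else 0)) *
            ∏ j : Fin n, g j (x j) := by rw [Real.exp_sum]
      _ ≤ Real.exp (2 * lam * T) * ∏ j : Fin n, g j (x j) := by
          refine mul_le_mul_of_nonneg_right ?_ (Finset.prod_nonneg fun j _ => hgnn j (x j))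
          rw [Real.exp_le_exp, ← Finset.mul_sum]
          have hsum : (∑ j : Fin n, (if x j then (1:ℝ) else 0))
              = ((∑ j : Fin n, if x j then 1 else 0 : ℕ) : ℝ) := by
            push_cast; simp
          rw [hsum]
          have h3 : ((∑ j : Fin n, if x j then 1 else 0 : ℕ) : ℝ) ≤ (T : ℝ) := by
            exact_mod_cast hxT
          exact mul_le_mul_of_nonneg_left h3 (by linarith)
  calc (∑ x ∈ univ.filter (fun x : Fin n → Bool =>
            (∑ j, if x j then 1 else 0) ≤ T),
          ∏ j : Fin n, ((if x j then c j else 1) ^ 2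
              / (if x j then θ j else 1 - θ j)))
      ≤ ∑ x ∈ univ.filter (fun x : Fin n → Bool =>
            (∑ j, if x j then 1 else 0) ≤ T),
          Real.exp (2 * lam * T) * ∏ j : Fin n, g j (x j) :=
        Finset.sum_le_sum hstep1
    _ ≤ ∑ x : Fin n → Bool, Real.exp (2 * lam * T) * ∏ j : Fin n, g j (x j) := by
        refine Finset.sum_le_sum_of_subset_of_nonneg (Finset.filter_subset _ _) ?_
        intro x _ _
        exact mul_nonneg (Real.exp_nonneg _) (Finset.prod_nonneg fun j _ => hgnn j (x j))
    _ = Real.exp (2 * lam * T) * ∑ x : Fin n → Bool, ∏ j : Fin n, g j (x j) := by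
        rw [Finset.mul_sum]
    _ = Real.exp (2 * lam * T) * ∏ j : Fin n, (∑ y : Bool, g j y) := by
        rw [Finset.prod_univ_sum, Fintype.piFinset_univ]
    _ = Real.exp (2 * lam * T) *
        ∏ j : Fin n, (Real.exp (-(2 * lam)) * (Real.exp lam + c j) ^ 2) := by
        congr 1
        refine Finset.prod_congr rfl fun j _ => ?_
        rw [Fintype.sum_bool]
        simp only [hg, Bool.false_eq_true, if_true, if_false]
        rw [show Real.exp (-(2*lam)) = 1 / (Real.exp lam)^2 by
          rw [Real.exp_neg]; congr 1; rw [two_mul, Real.exp_add]; ring]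
        field_simp
        ring

/-- asymptotic optimality of the fixed importance-sampling
change of measure built from the Lagrange multiplier `λ*`: the second moment
of the IS estimator grows at exponential rate at most `2V₀`. -/
theorem importance_sampling_asymptotically_optimal
    (σ : ℕ) (hσ : 1 ≤ σ) (s : Fin σ → ℕ) (hs : ∀ i, 2 ≤ s i)
    (a : Fin σ → ℝ) (ha : ∀ i, 0 < a i) (hsuma : ∑ i, a i = 1)
    (μ : ℝ) (hμ : μ ∈ Set.Ioo (0 : ℝ) 1)
    (lamStar : ℝ)
    (hlam : ∑ i, a i * ((s i : ℝ) - 1) / (Real.exp lamStar + (s i : ℝ) - 1) = μ / 2)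
    (θstar : Fin σ → ℝ)
    (hθ : ∀ i, θstar i = ((s i : ℝ) - 1) / (Real.exp lamStar + (s i : ℝ) - 1))
    (l : ℕ → Fin σ → ℕ) (hl : ∀ n, ∑ i, l n i = n)
    (hla : ∀ i, Filter.Tendsto (fun n => (l n i : ℝ) / n) Filter.atTop (nhds (a i)))
    (b : ℕ → ℕ → Fin σ)
    (hb : ∀ n, ∀ j < n, ∀ i : Fin σ, b n j = i ↔
      (∑ k ∈ univ.filter (fun k => k < i), l n k) ≤ j ∧
        j < (∑ k ∈ univ.filter (fun k => k < i), l n k) + l n i)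
    (T : ℕ → ℕ)
    (hT : Filter.Tendsto (fun n => (T n : ℝ) / n) Filter.atTop (nhds (μ / 2))) :
    Filter.limsup (fun n : ℕ => (1 / (n : ℝ)) * Real.log
        (∑ x ∈ univ.filter (fun x : Fin n → Bool =>
            (∑ j, if x j then 1 else 0) ≤ T n),
          ∏ j : Fin n,
            ((if x j then (s (b n j.val) : ℝ) - 1 else 1) ^ 2
              / (if x j then θstar (b n j.val) else 1 - θstar (b n j.val)))))
      Filter.atTop
      ≤ 2 * sSup {v : ℝ | ∃ θ : Fin σ → ℝ,
          (∀ i, θ i ∈ Set.Ioo (0 : ℝ) 1) ∧ (∑ i, a i * θ i) = μ / 2 ∧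
          v = ∑ i, a i * (θ i * Real.log ((s i : ℝ) - 1) + Hent (θ i))} := by
  set E : ℝ := Real.exp lamStar with hE
  have hEpos : (0:ℝ) < E := Real.exp_pos _
  have hd1 : ∀ i, (1:ℝ) ≤ (s i : ℝ) - 1 := by
    intro i
    have : (2:ℝ) ≤ (s i : ℝ) := by exact_mod_cast hs i
    linarith
  have hdpos : ∀ i, (0:ℝ) < (s i : ℝ) - 1 := fun i => lt_of_lt_of_le one_pos (hd1 i)
  have hCpos : ∀ i, (0:ℝ) < E + ((s i : ℝ) - 1) := fun i => add_pos hEpos (hdpos i)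
  -- rewrite hθ in a convenient form
  have hθ' : ∀ i, θstar i = ((s i : ℝ) - 1) / (E + ((s i : ℝ) - 1)) := by
    intro i; rw [hθ i]; ring_nf
  have hθ01 : ∀ i, θstar i ∈ Set.Ioo (0:ℝ) 1 := by
    intro i
    rw [hθ' i]
    constructor
    · exact div_pos (hdpos i) (hCpos i)
    · rw [div_lt_one (hCpos i)]; linarith
  have h1θ : ∀ i, 1 - θstar i = E / (E + ((s i : ℝ) - 1)) := by
    intro i
    have hC0 : (E + ((s i : ℝ) - 1)) ≠ 0 := (hCpos i).ne'
    rw [hθ' i]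
    field_simp
    ring
  -- λ* ≥ 0
  have hlam0 : 0 ≤ lamStar := by
    by_contra h
    push_neg at h
    have hE1 : E < 1 := by
      rw [hE, ← Real.exp_zero]
      exact Real.exp_lt_exp.2 h
    have hθhalf : ∀ i, (1:ℝ)/2 ≤ θstar i := by
      intro i
      rw [hθ' i, le_div_iff₀ (hCpos i)]
      have := hd1 i
      nlinarith
    have hsum2 : ∑ i, a i * θstar i = μ / 2 := by
      rw [← hlam]
      exact Finset.sum_congr rfl fun i _ => by rw [hθ i, mul_div_assoc]
    have h12 : (1:ℝ)/2 ≤ μ/2 := by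
      calc (1:ℝ)/2 = ∑ i, a i * (1/2) := by
            rw [← Finset.sum_mul, hsuma, one_mul]
        _ ≤ ∑ i, a i * θstar i :=
            Finset.sum_le_sum fun i _ => mul_le_mul_of_nonneg_left (hθhalf i) (ha i).le
        _ = μ / 2 := hsum2
    have := hμ.2
    linarith
  have hsumθ : ∑ i, a i * θstar i = μ / 2 := by
    rw [← hlam]
    exact Finset.sum_congr rfl fun i _ => by rw [hθ i, mul_div_assoc]
  -- the value attained by θstar
  set V : ℝ := (∑ i, a i * Real.log (E + ((s i : ℝ) - 1))) - lamStar * (1 - μ/2) with hV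
  set S : Set ℝ := {v : ℝ | ∃ θ : Fin σ → ℝ,
          (∀ i, θ i ∈ Set.Ioo (0 : ℝ) 1) ∧ (∑ i, a i * θ i) = μ / 2 ∧
          v = ∑ i, a i * (θ i * Real.log ((s i : ℝ) - 1) + Hent (θ i))} with hS
  -- per-block identity for the value of θstar
  have hval : ∀ i, θstar i * Real.log ((s i : ℝ) - 1) + Hent (θstar i)
      = Real.log (E + ((s i : ℝ) - 1)) - (1 - θstar i) * lamStar := by
    intro i
    have hd0 : ((s i : ℝ) - 1) ≠ 0 := (hdpos i).ne'
    have hC0 : (E + ((s i : ℝ) - 1)) ≠ 0 := (hCpos i).ne'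
    have hE0 : E ≠ 0 := hEpos.ne'
    rw [h1θ i, hθ' i]
    unfold Hent
    rw [show (1:ℝ) - ((s i : ℝ) - 1) / (E + ((s i : ℝ) - 1))
        = E / (E + ((s i : ℝ) - 1)) from by field_simp; ring]
    rw [Real.log_div hd0 hC0, Real.log_div hE0 hC0]
    rw [show Real.log E = lamStar from Real.log_exp lamStar]
    field_simp
    ring
  have hVmem : V ∈ S := by
    refine ⟨θstar, hθ01, hsumθ, ?_⟩
    rw [Finset.sum_congr rfl fun i _ => by rw [hval i]]
    have : ∑ i, a i * (Real.log (E + ((s i : ℝ) - 1)) - (1 - θstar i) * lamStar)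
        = (∑ i, a i * Real.log (E + ((s i : ℝ) - 1))) - lamStar * (∑ i, a i)
            + lamStar * (∑ i, a i * θstar i) := by
      rw [Finset.mul_sum, Finset.mul_sum, ← Finset.sum_sub_distrib, ← Finset.sum_add_distrib]
      exact Finset.sum_congr rfl fun i _ => by ring
    rw [this, hsuma, hsumθ, hV]
    ring
  have hbdd : BddAbove S := by
    refine ⟨∑ i, a i * (Real.log ((s i : ℝ) - 1) + 1), ?_⟩
    rintro v ⟨θ, hθIoo, _, rfl⟩
    refine Finset.sum_le_sum fun i _ => ?_
    refine mul_le_mul_of_nonneg_left ?_ (ha i).le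
    have hlog : 0 ≤ Real.log ((s i : ℝ) - 1) := Real.log_nonneg (hd1 i)
    have h1 : θ i * Real.log ((s i : ℝ) - 1) ≤ Real.log ((s i : ℝ) - 1) := by
      nlinarith [(hθIoo i).2, (hθIoo i).1]
    have h2 : Hent (θ i) ≤ 1 := Hent_le_one (hθIoo i).1 (hθIoo i).2
    linarith
  have hVle : V ≤ sSup S := le_csSup hbdd hVmem
  -- the block exponents
  set F : Fin σ → ℝ := fun i => 2 * Real.log (E + ((s i : ℝ) - 1)) - 2 * lamStar with hF
  set u : ℕ → ℝ := fun n => (2 * lamStar * (T n : ℝ) + ∑ i, (l n i : ℝ) * F i) / n with hu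
  set LHS : ℕ → ℝ := fun n : ℕ => (1 / (n : ℝ)) * Real.log
        (∑ x ∈ univ.filter (fun x : Fin n → Bool =>
            (∑ j, if x j then 1 else 0) ≤ T n),
          ∏ j : Fin n,
            ((if x j then (s (b n j.val) : ℝ) - 1 else 1) ^ 2
              / (if x j then θstar (b n j.val) else 1 - θstar (b n j.val)))) with hLHS
  -- Σ_n ≥ 1
  have hSig1 : ∀ n, (1:ℝ) ≤ ∑ x ∈ univ.filter (fun x : Fin n → Bool =>
            (∑ j, if x j then 1 else 0) ≤ T n),
          ∏ j : Fin n,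
            ((if x j then (s (b n j.val) : ℝ) - 1 else 1) ^ 2
              / (if x j then θstar (b n j.val) else 1 - θstar (b n j.val))) := by
    intro n
    have hmem : (fun _ : Fin n => false) ∈ univ.filter (fun x : Fin n → Bool =>
        (∑ j, if x j then 1 else 0) ≤ T n) := by
      simp
    have hterm : (1:ℝ) ≤ ∏ j : Fin n,
        ((if (fun _ : Fin n => false) j then (s (b n j.val) : ℝ) - 1 else 1) ^ 2
          / (if (fun _ : Fin n => false) j then θstar (b n j.val)
              else 1 - θstar (b n j.val))) := by
      simp only [Bool.false_eq_true, if_false, one_pow]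
      refine le_trans (le_of_eq (Finset.prod_const_one (s := (univ : Finset (Fin n)))).symm)
        (Finset.prod_le_prod (fun j _ => zero_le_one) fun j _ => ?_)
      have h0 : 0 < 1 - θstar (b n j.val) := by
        have := (hθ01 (b n j.val)).2; linarith
      rw [one_le_div h0]
      have := (hθ01 (b n j.val)).1
      linarith
    have hnn : ∀ x ∈ univ.filter (fun x : Fin n → Bool =>
        (∑ j, if x j then 1 else 0) ≤ T n),
        0 ≤ ∏ j : Fin n,
          ((if x j then (s (b n j.val) : ℝ) - 1 else 1) ^ 2
            / (if x j then θstar (b n j.val) else 1 - θstar (b n j.val))) := by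
      intro x _
      refine Finset.prod_nonneg fun j _ => ?_
      have h0 : 0 < 1 - θstar (b n j.val) := by
        have := (hθ01 (b n j.val)).2; linarith
      have h1 := (hθ01 (b n j.val)).1
      cases hx : x j <;> simp only [hx, Bool.false_eq_true, if_true, if_false] <;> positivity
    calc (1:ℝ) ≤ _ := hterm
      _ ≤ _ := Finset.single_le_sum hnn hmem
  have hLHS0 : ∀ n, 0 ≤ LHS n := by
    intro n
    rw [hLHS]
    exact mul_nonneg (by positivity) (Real.log_nonneg (hSig1 n))
  -- the main per-n inequality
  have hmain : ∀ n : ℕ, 1 ≤ n → LHS n ≤ u n := by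
    intro n hn
    have hc : ∀ j : Fin n, (1:ℝ) ≤ (s (b n j.val) : ℝ) - 1 := fun j => hd1 _
    have hθn : ∀ j : Fin n, θstar (b n j.val)
        = ((s (b n j.val) : ℝ) - 1) / (Real.exp lamStar + ((s (b n j.val) : ℝ) - 1)) := by
      intro j; rw [hθ' (b n j.val)]
    have hbound := sigma_bound n lamStar hlam0 (T n)
      (fun j : Fin n => (s (b n j.val) : ℝ) - 1) hc
      (fun j : Fin n => θstar (b n j.val)) hθn
    have hSpos : (0:ℝ) < ∑ x ∈ univ.filter (fun x : Fin n → Bool =>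
            (∑ j, if x j then 1 else 0) ≤ T n),
          ∏ j : Fin n,
            ((if x j then (s (b n j.val) : ℝ) - 1 else 1) ^ 2
              / (if x j then θstar (b n j.val) else 1 - θstar (b n j.val))) :=
      lt_of_lt_of_le one_pos (hSig1 n)
    have hfacpos : ∀ j : Fin n, (0:ℝ) <
        Real.exp (-(2 * lamStar)) * (Real.exp lamStar + ((s (b n j.val) : ℝ) - 1)) ^ 2 :=
      fun j => mul_pos (Real.exp_pos _) (pow_pos (hCpos (b n j.val)) 2)
    have hlog : Real.log (∑ x ∈ univ.filter (fun x : Fin n → Bool =>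
            (∑ j, if x j then 1 else 0) ≤ T n),
          ∏ j : Fin n,
            ((if x j then (s (b n j.val) : ℝ) - 1 else 1) ^ 2
              / (if x j then θstar (b n j.val) else 1 - θstar (b n j.val))))
        ≤ 2 * lamStar * (T n : ℝ) + ∑ i, (l n i : ℝ) * F i := by
      calc Real.log (∑ x ∈ univ.filter (fun x : Fin n → Bool =>
            (∑ j, if x j then 1 else 0) ≤ T n),
          ∏ j : Fin n,
            ((if x j then (s (b n j.val) : ℝ) - 1 else 1) ^ 2
              / (if x j then θstar (b n j.val) else 1 - θstar (b n j.val))))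
          ≤ Real.log (Real.exp (2 * lamStar * (T n : ℝ)) *
              ∏ j : Fin n, (Real.exp (-(2 * lamStar)) *
                (Real.exp lamStar + ((s (b n j.val) : ℝ) - 1)) ^ 2)) := by
            apply Real.log_le_log hSpos
            exact hbound
        _ = 2 * lamStar * (T n : ℝ) + ∑ j : Fin n, F (b n j.val) := by
            rw [Real.log_mul (Real.exp_ne_zero _)
              (ne_of_gt (Finset.prod_pos fun j _ => hfacpos j)),
              Real.log_exp, Real.log_prod (fun j _ => (hfacpos j).ne')]
            congr 1
            refine Finset.sum_congr rfl fun j _ => ?_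
            rw [Real.log_mul (Real.exp_ne_zero _) (ne_of_gt (pow_pos (hCpos (b n j.val)) 2)),
              Real.log_exp, Real.log_pow, hF]
            push_cast
            ring
        _ = 2 * lamStar * (T n : ℝ) + ∑ i, (l n i : ℝ) * F i := by
            rw [block_sum n (l n) (hl n) (fun j => b n j) (hb n) F]
    simp only [hLHS, hu]
    have hn0 : (0:ℝ) < (n : ℝ) := by exact_mod_cast hn
    rw [show (2 * lamStar * (T n : ℝ) + ∑ i, (l n i : ℝ) * F i) / (n : ℝ)
        = 1/(n:ℝ) * (2 * lamStar * (T n : ℝ) + ∑ i, (l n i : ℝ) * F i) from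
      (one_div_mul_eq_div _ _).symm]
    exact mul_le_mul_of_nonneg_left hlog (one_div_nonneg.2 hn0.le)
  -- convergence of the upper bound
  have hufrm : ∀ n : ℕ, u n = 2 * lamStar * ((T n : ℝ)/n) + ∑ i, ((l n i : ℝ)/n) * F i := by
    intro n
    simp only [hu]
    rw [add_div, Finset.sum_div]
    congr 1
    · rw [mul_div_assoc]
    · exact Finset.sum_congr rfl fun i _ => by rw [mul_div_right_comm]
  have hulim : Filter.Tendsto u Filter.atTop
      (nhds (2 * lamStar * (μ/2) + ∑ i, a i * F i)) := by
    rw [show u = fun n => 2 * lamStar * ((T n : ℝ)/n) + ∑ i, ((l n i : ℝ)/n) * F i from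
      funext hufrm]
    exact Filter.Tendsto.add (hT.const_mul _)
      (tendsto_finset_sum _ fun i _ => (hla i).mul_const (F i))
  have hlimval : 2 * lamStar * (μ/2) + ∑ i, a i * F i = 2 * V := by
    have h1 : ∑ i, a i * F i
        = 2 * (∑ i, a i * Real.log (E + ((s i : ℝ) - 1))) - 2 * lamStar := by
      have h2 : ∀ i ∈ (univ : Finset (Fin σ)), a i * F i
          = 2 * (a i * Real.log (E + ((s i : ℝ) - 1))) - 2 * lamStar * a i :=
        fun i _ => by rw [hF]; ring
      rw [Finset.sum_congr rfl h2, Finset.sum_sub_distrib, ← Finset.mul_sum, ← Finset.mul_sum,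
        hsuma, mul_one]
    rw [h1, hV]
    ring
  have hblim : Filter.Tendsto u Filter.atTop (nhds (2 * V)) := hlimval ▸ hulim
  have hbddu : Filter.IsBoundedUnder (· ≤ ·) Filter.atTop u := hblim.isBoundedUnder_le
  have hcob : Filter.IsCoboundedUnder (· ≤ ·) Filter.atTop LHS :=
    Filter.isCoboundedUnder_le_of_eventually_le Filter.atTop (x := 0)
      (Filter.Eventually.of_forall hLHS0)
  have hev : LHS ≤ᶠ[Filter.atTop] u := Filter.eventually_atTop.2 ⟨1, hmain⟩
  calc Filter.limsup LHS Filter.atTop ≤ Filter.limsup u Filter.atTop :=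
        Filter.limsup_le_limsup hev hcob hbddu
    _ = 2 * V := hblim.limsup_eq
    _ ≤ 2 * sSup S := by linarith
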